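/- Let A* be a p-torsion free Dieudonné algebra. Then the map γ : (η_p A)*/p → (H*(A*/p), β) sending x ∈ (η_p A)^i to the class of x/p^i is a quasi-isomorphism of cochain complexes, where β is the Bockstein differential on H*(A*/p). -/
import Mathlib


namespace Statement2

variable {A : ℕ → Type} [∀ n, AddCommGroup (A n)]

/-- `x ∈ (η_p A)^i = {x ∈ p^i A^i : d x ∈ p^{i+1} A^{i+1}}`. -/
def etaMem (p : ℕ) (d : ∀ n, A n →+ A (n + 1)) (i : ℕ) (x : A i) : Prop :=
  (∃ y, x = (p : ℤ) ^ i • y) ∧ ∃ z, d i x = (p : ℤ) ^ (i + 1) • z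

/-- `x` is a cocycle of the complex `(η_p A)*/p` in degree `i`. -/
def etaCocycle (p : ℕ) (d : ∀ n, A n →+ A (n + 1)) (i : ℕ) (x : A i) : Prop :=
  etaMem p d i x ∧ ∃ w, etaMem p d (i + 1) w ∧ d i x = (p : ℤ) • w

/-- `x` is a coboundary of the complex `(η_p A)*/p` in degree `i`
(i.e. lies in `p·(η_p A)^i + d (η_p A)^{i-1}`). -/
def etaCoboundary (p : ℕ) (d : ∀ n, A n →+ A (n + 1)) : ∀ i, A i → Prop
  | 0, x => ∃ a, etaMem p d 0 a ∧ x = (p : ℤ) • a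
  | (j + 1), x => ∃ a b, etaMem p d (j + 1) a ∧ etaMem p d j b ∧
      x = (p : ℤ) • a + d j b

/-- `x` represents the zero class of `H^i(A*/p)`, i.e. `x ∈ p A^i + d A^{i-1}`. -/
def hModPZero (p : ℕ) (d : ∀ n, A n →+ A (n + 1)) : ∀ i, A i → Prop
  | 0, x => ∃ u, x = (p : ℤ) • u
  | (j + 1), x => ∃ u v, x = (p : ℤ) • u + d j v

/-- `x` represents a cocycle of the complex `(H^*(A*/p), β)` in degree `i`:
`x` is a cocycle mod `p` and its Bockstein `β[x] = [d x / p]` vanishes. -/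
def bocksteinCocycle (p : ℕ) (d : ∀ n, A n →+ A (n + 1)) (i : ℕ) (x : A i) : Prop :=
  ∃ w, d i x = (p : ℤ) • w ∧ hModPZero p d (i + 1) w

/-- `x` represents a coboundary of the complex `(H^*(A*/p), β)` in degree `i`:
the class of `x` equals `β` of some class of `H^{i-1}(A*/p)`. -/
def bocksteinCoboundary (p : ℕ) (d : ∀ n, A n →+ A (n + 1)) : ∀ i, A i → Prop
  | 0, x => hModPZero p d 0 x
  | (j + 1), x => ∃ t s, d j t = (p : ℤ) • s ∧ hModPZero p d (j + 1) (x - s)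

/-- `p`-th power in degree `0` of the graded multiplication. -/
def gradedPow0 (mul : ∀ i j, A i →+ A j →+ A (i + j)) (one : A 0) : A 0 → ℕ → A 0
  | _, 0 => one
  | x, (n + 1) => mul 0 0 x (gradedPow0 mul one x n)

end Statement2

open Statement2 in
/-- Let `A*` be a `p`-torsion free Dieudonné algebra.  Then the map
`γ : (η_p A)*/p → (H^*(A*/p), β)`, sending `x ∈ (η_p A)^i` with `x = p^i y` to the
class of `y` in `H^i(A*/p)` (with `β` the Bockstein differential), is a
quasi-isomorphism of cochain complexes: it induces a bijection on cohomology in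
every degree, stated here on the level of representatives. -/
theorem statement2
    (p : ℕ) (hp : p.Prime)
    (A : ℕ → Type) [∀ n, AddCommGroup (A n)]
    (d : ∀ n, A n →+ A (n + 1))
    (hdd : ∀ n (x : A n), d (n + 1) (d n x) = 0)
    (F : ∀ n, A n →+ A n)
    (one : A 0)
    (mul : ∀ i j, A i →+ A j →+ A (i + j))
    (hFmul : ∀ i j (x : A i) (y : A j),
      F (i + j) (mul i j x y) = mul i j (F i x) (F j y))
    (hFone : F 0 one = one)
    (hFp : ∀ x : A 0, ∃ y, F 0 x = Statement2.gradedPow0 mul one x p + (p : ℤ) • y)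
    (hdF : ∀ n (x : A n), d n (F n x) = (p : ℤ) • F (n + 1) (d n x))
    (htf : ∀ n (x : A n), (p : ℤ) • x = 0 → x = 0) :
    ∀ i : ℕ,
      -- surjectivity of `H^i(γ)`
      (∀ x : A i, bocksteinCocycle p d i x →
        ∃ e y, etaCocycle p d i e ∧ e = (p : ℤ) ^ i • y ∧
          bocksteinCoboundary p d i (x - y)) ∧
      -- injectivity of `H^i(γ)`
      (∀ (e y : A i), etaCocycle p d i e → e = (p : ℤ) ^ i • y →
        bocksteinCoboundary p d i y → etaCoboundary p d i e) := by
  -- cancellation of powers of `p`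
  have hcancel : ∀ (n k : ℕ) (x y : A n), (p : ℤ) ^ k • x = (p : ℤ) ^ k • y → x = y := by
    intro n k
    induction k with
    | zero => intro x y h; simpa using h
    | succ k ih =>
      intro x y h
      apply ih
      apply sub_eq_zero.mp
      apply htf
      rw [smul_sub, smul_smul, smul_smul, ← pow_succ', h, sub_self]
  -- multiples of `p` are Bockstein coboundaries
  have hbcb : ∀ (i : ℕ) (x v : A i), x = (p : ℤ) • v → bocksteinCoboundary p d i x := by
    intro i x v hxv
    match i, x, v, hxv with
    | 0, x, v, hxv => exact ⟨v, hxv⟩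
    | j + 1, x, v, hxv => exact ⟨0, 0, by simp, v, 0, by simpa using hxv⟩
  intro i
  constructor
  · -- surjectivity
    intro x hx
    obtain ⟨w, hdx, u, v, hw⟩ := hx
    have hdw : d (i + 1) w = 0 := by
      apply htf
      have := hdd i x
      rw [hdx, map_zsmul] at this
      exact this
    have hdu : d (i + 1) u = 0 := by
      apply htf
      have h0 : d (i + 1) w = (p : ℤ) • d (i + 1) u + d (i + 1) (d i v) := by
        rw [hw, map_add, map_zsmul]
      rw [hdd, add_zero, hdw] at h0
      exact h0.symm
    set y : A i := x - (p : ℤ) • v with hy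
    have hdy : d i y = ((p : ℤ) ^ 2) • u := by
      rw [hy, map_sub, map_zsmul, hdx, hw]
      module
    refine ⟨(p : ℤ) ^ i • y, y, ⟨⟨⟨y, rfl⟩, ⟨(p : ℤ) • u, ?_⟩⟩,
      ⟨(p : ℤ) ^ (i + 1) • u, ⟨⟨u, rfl⟩, ⟨0, ?_⟩⟩, ?_⟩⟩, rfl, ?_⟩
    · rw [map_zsmul, hdy]; module
    · rw [map_zsmul, hdu, smul_zero, smul_zero]
    · rw [map_zsmul, hdy]; module
    · exact hbcb i (x - y) v (by rw [hy]; abel)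
  · -- injectivity
    intro e y hcoc hey hbc
    match i, e, y, hcoc, hey, hbc with
    | 0, e, y, hcoc, hey, hbc =>
      obtain ⟨_, w, ⟨⟨z, hwz⟩, _⟩, hde⟩ := hcoc
      obtain ⟨u, hyu⟩ := hbc
      have hey' : e = y := by simpa using hey
      have h1 : (p : ℤ) • d 0 u = (p : ℤ) • ((p : ℤ) ^ (0 + 1) • z) := by
        rw [← map_zsmul (d 0), ← hyu, ← hey', hde, hwz]
      refine ⟨u, ⟨⟨u, by simp⟩, z, sub_eq_zero.mp (htf _ _ ?_)⟩, by rw [hey', hyu]⟩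
      rw [smul_sub, h1, sub_self]
    | j + 1, e, y, hcoc, hey, hbc =>
      obtain ⟨_, w, ⟨⟨z, hwz⟩, _⟩, hde⟩ := hcoc
      obtain ⟨t, s, hdt, u, v, hys⟩ := hbc
      have hds : d (j + 1) s = 0 := by
        apply htf
        have := hdd j t
        rw [hdt, map_zsmul] at this
        exact this
      have hdy : d (j + 1) y = ((p : ℤ) ^ 2) • z := by
        apply hcancel _ (j + 1)
        have h1 : (p : ℤ) ^ (j + 1) • d (j + 1) y
            = (p : ℤ) • ((p : ℤ) ^ (j + 1 + 1) • z) := by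
          rw [← map_zsmul (d (j + 1)), ← hey, hde, hwz]
        rw [h1]; module
      have hy2 : y = s + (p : ℤ) • u + d j v := by
        have := sub_eq_iff_eq_add.mp hys
        rw [this]; abel
      have h2 : d (j + 1) y = (p : ℤ) • d (j + 1) u := by
        rw [hy2, map_add, map_add, hds, map_zsmul, hdd]
        abel
      have hdu : d (j + 1) u = (p : ℤ) • z := by
        apply sub_eq_zero.mp
        apply htf
        have h3 : (p : ℤ) • d (j + 1) u = (p : ℤ) • ((p : ℤ) • z) := by
          rw [← h2, hdy]; module
        rw [smul_sub, h3, sub_self]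
      refine ⟨(p : ℤ) ^ (j + 1) • u, (p : ℤ) ^ j • t + (p : ℤ) ^ (j + 1) • v,
        ⟨⟨u, rfl⟩, ⟨z, ?_⟩⟩, ⟨⟨t + (p : ℤ) • v, ?_⟩, ⟨s + d j v, ?_⟩⟩, ?_⟩
      · rw [map_zsmul, hdu]; module
      · module
      · rw [map_add, map_zsmul, map_zsmul, hdt]; module
      · rw [hey, hy2, map_add, map_zsmul, map_zsmul, hdt]; module
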